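/- Let G be a triangle-free simple graph with n vertices and m ≥ 1 edges. For any edge uv ∈ E(G) with endpoint degrees d_u and d_v, the Ky Fan 2-norm of the LI-matrix satisfies ||LI(G)||_{F_2} ≥ √(Υ + 2√Ψ), where Υ = (d_u − 2m/n)² + (d_v − 2m/n)² + d_u + d_v and Ψ = ((d_u − 2m/n)² + d_u)·((d_v − 2m/n)² + d_v) − (d_u + d_v − 4m/n)². -/

import Mathlib

open Finset SimpleGraph

attribute [local instance] Classical.propDecidable

/-- The `i`-th largest value of the tuple `f` (values sorted in non-increasing order). -/
noncomputable def sortDesc {n : ℕ} (f : Fin n → ℝ) : Fin n → ℝ :=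
  fun i => f (Tuple.sort f i.rev)

/-- The Laplacian eigenvalues of `G`, in non-increasing order:
`lapEig G 0 = μ₁ ≥ lapEig G 1 = μ₂ ≥ ⋯`. -/
noncomputable def lapEig {n : ℕ} (G : SimpleGraph (Fin n)) : Fin n → ℝ :=
  sortDesc (SimpleGraph.posSemidef_lapMatrix ℝ G).isHermitian.eigenvalues

/-- The number of edges of `G`. -/
noncomputable def numEdges {n : ℕ} (G : SimpleGraph (Fin n)) : ℕ :=
  G.edgeFinset.card

/-- The singular values of the LI-matrix `LI(G) = L(G) - (2m/n)·Iₙ`, in non-increasing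
order; they are the values `|μᵢ - 2m/n|` sorted non-increasingly. -/
noncomputable def LIsv {n : ℕ} (G : SimpleGraph (Fin n)) : Fin n → ℝ :=
  sortDesc (fun i => |lapEig G i - 2 * numEdges G / n|)

/-- The Ky Fan `k`-norm of the LI-matrix of `G`: the sum of the `k` largest singular
values of `LI(G)`. -/
noncomputable def kyFanLI {n : ℕ} (G : SimpleGraph (Fin n)) (k : ℕ) : ℝ :=
  ∑ i ∈ Finset.univ.filter (fun i : Fin n => (i : ℕ) < k), LIsv G i

/-- `S_k(L(G))`, the sum of the `k` largest Laplacian eigenvalues of `G`. -/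
noncomputable def lapSum {n : ℕ} (G : SimpleGraph (Fin n)) (k : ℕ) : ℝ :=
  ∑ i ∈ Finset.univ.filter (fun i : Fin n => (i : ℕ) < k), lapEig G i

section Aux

open Matrix

lemma sortDesc_anti {n : ℕ} (f : Fin n → ℝ) : Antitone (sortDesc f) := by
  intro i j hij
  exact Tuple.monotone_sort f (Fin.rev_le_rev.mpr hij)

lemma top_two {n : ℕ} (hn : 2 ≤ n) (f : Fin n → ℝ) (i j : Fin n) (hij : i ≠ j) :
    f i + f j ≤ sortDesc f ⟨0, by omega⟩ + sortDesc f ⟨1, by omega⟩ := by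
  set σ : Equiv.Perm (Fin n) := (Fin.revPerm.trans (Tuple.sort f)) with hσ
  have hs : ∀ k, sortDesc f k = f (σ k) := fun k => rfl
  have hi : f i = sortDesc f (σ.symm i) := by rw [hs, Equiv.apply_symm_apply]
  have hj : f j = sortDesc f (σ.symm j) := by rw [hs, Equiv.apply_symm_apply]
  have hab : σ.symm i ≠ σ.symm j := fun h => hij (by simpa using congrArg σ h)
  rw [hi, hj]
  rcases lt_or_gt_of_ne hab with h | h
  · have h1 : sortDesc f (σ.symm i) ≤ sortDesc f ⟨0, by omega⟩ :=
      sortDesc_anti f (by simp [Fin.le_def])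
    have h2 : sortDesc f (σ.symm j) ≤ sortDesc f ⟨1, by omega⟩ := by
      apply sortDesc_anti f
      have := h
      simp only [Fin.lt_def] at this
      simp [Fin.le_def]; omega
    linarith
  · have h1 : sortDesc f (σ.symm j) ≤ sortDesc f ⟨0, by omega⟩ :=
      sortDesc_anti f (by simp [Fin.le_def])
    have h2 : sortDesc f (σ.symm i) ≤ sortDesc f ⟨1, by omega⟩ := by
      apply sortDesc_anti f
      have := h
      simp only [Fin.lt_def] at this
      simp [Fin.le_def]; omega
    linarith

lemma quad_lb (s t C12 c d : ℝ) (hs : 0 ≤ s) (ht : 0 ≤ t) (hst : s * t = C12 ^ 2) :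
    0 ≤ s * c ^ 2 + 2 * c * d * C12 + t * d ^ 2 := by
  rcases eq_or_lt_of_le hs with hs0 | hs0
  · have hC : C12 = 0 := by
      have h2 : C12 ^ 2 = 0 := by rw [← hst, ← hs0]; ring
      exact pow_eq_zero_iff (by norm_num) |>.mp h2
    subst hC
    nlinarith [mul_nonneg ht (sq_nonneg d)]
  · nlinarith [sq_nonneg (s * c + C12 * d), hst, mul_pos hs0 hs0, sq_nonneg d]

lemma core_aux {n : ℕ} (hn : 2 ≤ n) (q a b : Fin n → ℝ) (hq : ∀ i, 0 ≤ q i)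
    (ha : ∑ i, a i * a i = 1) (hb : ∑ i, b i * b i = 1) (hab : ∑ i, a i * b i = 0)
    (C11 C22 C12 D : ℝ) (hDnn : 0 ≤ D) (hD2 : D ^ 2 = (C11 - C22) ^ 2 + 4 * C12 ^ 2)
    (hR : ∀ c d : ℝ, ∑ i, q i * (c * a i + d * b i) ^ 2
        = c ^ 2 * C11 + 2 * c * d * C12 + d ^ 2 * C22) :
    ∃ i j : Fin n, i ≠ j ∧
      (C11 + C22 + D) / 2 ≤ q i ∧
      (C11 + C22 - D) / 2 ≤ q j := by
  have hge1 : C11 - C22 ≤ D := by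
    nlinarith [sq_nonneg (D - (C11 - C22)), sq_nonneg (D + (C11 - C22)), sq_nonneg C12]
  have hge2 : C22 - C11 ≤ D := by
    nlinarith [sq_nonneg (D - (C22 - C11)), sq_nonneg (D + (C22 - C11)), sq_nonneg C12]
  have hsum : ∀ c d : ℝ, ∑ i, (c * a i + d * b i) ^ 2 = c ^ 2 + d ^ 2 := by
    intro c d
    have he : ∀ i : Fin n, (c * a i + d * b i) ^ 2
        = c ^ 2 * (a i * a i) + 2 * c * d * (a i * b i) + d ^ 2 * (b i * b i) := by
      intro i; ring
    rw [Finset.sum_congr rfl (fun i _ => he i)]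
    simp only [Finset.sum_add_distrib, ← Finset.mul_sum, ha, hb, hab]
    ring
  have hne : (Finset.univ : Finset (Fin n)).Nonempty := ⟨⟨0, by omega⟩, mem_univ _⟩
  obtain ⟨i₀, -, hmax⟩ := Finset.exists_max_image Finset.univ q hne
  have hub : ∀ c d : ℝ, ∑ i, q i * (c * a i + d * b i) ^ 2 ≤ q i₀ * (c ^ 2 + d ^ 2) := by
    intro c d
    rw [← hsum c d, Finset.mul_sum]
    exact Finset.sum_le_sum fun i _ =>
      mul_le_mul_of_nonneg_right (hmax i (mem_univ i)) (sq_nonneg _)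
  have hα : (C11 + C22 + D) / 2 ≤ q i₀ := by
    by_cases hC : C12 = 0
    · have h10 := (hR 1 0).symm.trans_le (hub 1 0)
      have h01 := (hR 0 1).symm.trans_le (hub 0 1)
      norm_num at h10 h01
      subst hC
      have hz : (D - (C11 - C22)) * (D - (C22 - C11)) = 0 := by linear_combination hD2
      rcases mul_eq_zero.mp hz with h | h <;> nlinarith
    · have hchar : ((C11 + C22 + D) / 2 - C11) * ((C11 + C22 + D) / 2 - C22) = C12 ^ 2 := by
        linear_combination hD2 / 4
      have hkey : (C11 + C22 + D) / 2 * (C12 ^ 2 + ((C11 + C22 + D) / 2 - C11) ^ 2)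
          = C12 ^ 2 * C11 + 2 * C12 * ((C11 + C22 + D) / 2 - C11) * C12
            + ((C11 + C22 + D) / 2 - C11) ^ 2 * C22 := by
        linear_combination ((C11 + C22 + D) / 2 - C11) * hchar
      have hpos : (0:ℝ) < C12 ^ 2 + ((C11 + C22 + D) / 2 - C11) ^ 2 := by positivity
      have hrc := (hR C12 ((C11 + C22 + D) / 2 - C11)).symm.trans_le
        (hub C12 ((C11 + C22 + D) / 2 - C11))
      refine le_of_mul_le_mul_right ?_ hpos
      linarith [hkey, hrc]
  obtain ⟨c, d, hcd0, hcdpos⟩ : ∃ c d : ℝ, c * a i₀ + d * b i₀ = 0 ∧ 0 < c ^ 2 + d ^ 2 := by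
    by_cases h : a i₀ = 0 ∧ b i₀ = 0
    · exact ⟨1, 0, by simp [h.1], by norm_num⟩
    · refine ⟨-b i₀, a i₀, by ring, ?_⟩
      rcases not_and_or.mp h with h | h
      · positivity
      · have : 0 < (b i₀) ^ 2 := by positivity
        nlinarith [sq_nonneg (a i₀)]
  have hne2 : ((Finset.univ : Finset (Fin n)).erase i₀).Nonempty := by
    rw [← Finset.card_pos, Finset.card_erase_of_mem (mem_univ _), Finset.card_univ,
      Fintype.card_fin]
    omega
  obtain ⟨j, hjmem, hjmax⟩ := Finset.exists_max_image _ q hne2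
  have hji : j ≠ i₀ := (Finset.mem_erase.mp hjmem).1
  have hzero : q i₀ * (c * a i₀ + d * b i₀) ^ 2 = 0 := by rw [hcd0]; ring
  have hub2 : ∑ i, q i * (c * a i + d * b i) ^ 2 ≤ q j * (c ^ 2 + d ^ 2) := by
    calc ∑ i, q i * (c * a i + d * b i) ^ 2
        = q i₀ * (c * a i₀ + d * b i₀) ^ 2
            + ∑ i ∈ Finset.univ.erase i₀, q i * (c * a i + d * b i) ^ 2 :=
          (Finset.add_sum_erase _ _ (mem_univ i₀)).symm
      _ = ∑ i ∈ Finset.univ.erase i₀, q i * (c * a i + d * b i) ^ 2 := by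
          rw [hzero, zero_add]
      _ ≤ ∑ i ∈ Finset.univ.erase i₀, q j * (c * a i + d * b i) ^ 2 :=
          Finset.sum_le_sum fun i hi =>
            mul_le_mul_of_nonneg_right (hjmax i hi) (sq_nonneg _)
      _ = q j * ∑ i ∈ Finset.univ.erase i₀, (c * a i + d * b i) ^ 2 := by
          rw [Finset.mul_sum]
      _ ≤ q j * ∑ i, (c * a i + d * b i) ^ 2 := by
          refine mul_le_mul_of_nonneg_left ?_ (hq j)
          exact Finset.sum_le_sum_of_subset_of_nonneg (Finset.erase_subset _ _)
            (fun i _ _ => sq_nonneg _)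
      _ = q j * (c ^ 2 + d ^ 2) := by rw [hsum]
  have hs : 0 ≤ C11 - (C11 + C22 - D) / 2 := by linarith
  have ht : 0 ≤ C22 - (C11 + C22 - D) / 2 := by linarith
  have hst : (C11 - (C11 + C22 - D) / 2) * (C22 - (C11 + C22 - D) / 2) = C12 ^ 2 := by
    linear_combination hD2 / 4
  have hlb : (C11 + C22 - D) / 2 * (c ^ 2 + d ^ 2)
      ≤ c ^ 2 * C11 + 2 * c * d * C12 + d ^ 2 * C22 := by
    have h := quad_lb (C11 - (C11 + C22 - D) / 2) (C22 - (C11 + C22 - D) / 2) C12 c d hs ht hst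
    nlinarith [h]
  have hβ : (C11 + C22 - D) / 2 ≤ q j := by
    have h1 : (C11 + C22 - D) / 2 * (c ^ 2 + d ^ 2) ≤ q j * (c ^ 2 + d ^ 2) :=
      hlb.trans ((hR c d).symm.trans_le hub2)
    exact le_of_mul_le_mul_right h1 hcdpos
  exact ⟨i₀, j, fun h => hji h.symm, hα, hβ⟩

variable {n : ℕ} (G : SimpleGraph (Fin n))

noncomputable abbrev hLH := (SimpleGraph.posSemidef_lapMatrix ℝ G).isHermitian

lemma parseval (z z' : Fin n → ℝ) :
    ∑ i, (∑ k, (hLH G).eigenvectorBasis i k * z k) * (∑ k, (hLH G).eigenvectorBasis i k * z' k)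
      = ∑ k, z k * z' k := by
  have h := (hLH G).eigenvectorBasis.sum_inner_mul_inner
    ((WithLp.equiv 2 _).symm z) ((WithLp.equiv 2 _).symm z')
  simp only [PiLp.inner_apply, RCLike.inner_apply, conj_trivial,
    WithLp.equiv_symm_apply, PiLp.toLp_apply] at h
  rw [Finset.sum_congr rfl fun k _ => mul_comm (z k) (z' k), ← h]
  exact Finset.sum_congr rfl fun i _ => by
    rw [Finset.sum_congr rfl fun k _ => mul_comm ((hLH G).eigenvectorBasis i k) (z' k)]

lemma eig_eq (x : Fin n → ℝ) (i : Fin n) :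
    ∑ k, (hLH G).eigenvectorBasis i k * (G.lapMatrix ℝ *ᵥ x) k
      = (hLH G).eigenvalues i * ∑ k, (hLH G).eigenvectorBasis i k * x k := by
  have hsym : (G.lapMatrix ℝ)ᵀ = G.lapMatrix ℝ := G.isSymm_lapMatrix (R := ℝ)
  have h1 : (⇑((hLH G).eigenvectorBasis i) : Fin n → ℝ) ⬝ᵥ (G.lapMatrix ℝ *ᵥ x)
      = (G.lapMatrix ℝ *ᵥ ⇑((hLH G).eigenvectorBasis i)) ⬝ᵥ x := by
    rw [Matrix.dotProduct_mulVec, ← Matrix.mulVec_transpose, hsym]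
  rw [show (∑ k, (hLH G).eigenvectorBasis i k * (G.lapMatrix ℝ *ᵥ x) k)
      = (⇑((hLH G).eigenvectorBasis i) : Fin n → ℝ) ⬝ᵥ (G.lapMatrix ℝ *ᵥ x) from rfl, h1,
    (hLH G).mulVec_eigenvectorBasis]
  simp [dotProduct, Finset.mul_sum, mul_assoc]

lemma lap_apply (i j : Fin n) :
    G.lapMatrix ℝ i j
      = (if i = j then (G.degree i : ℝ) else 0) - (if G.Adj i j then 1 else 0) := by
  simp [lapMatrix, degMatrix, Matrix.sub_apply, Matrix.diagonal_apply, adjMatrix_apply]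

lemma deg_sum (x : Fin n) :
    ∑ k, (if G.Adj k x then (1:ℝ) else 0) = G.degree x := by
  rw [Finset.sum_boole]
  congr 1
  rw [show Finset.univ.filter (fun k => G.Adj k x) = G.neighborFinset x by
    ext k; simp [adj_comm]]
  exact (G.card_neighborFinset_eq_degree x)

lemma col_sq_sum (u : Fin n) :
    ∑ k, G.lapMatrix ℝ k u * G.lapMatrix ℝ k u = (G.degree u : ℝ) ^ 2 + G.degree u := by
  rw [← Finset.add_sum_erase _ _ (Finset.mem_univ u)]
  have h1 : G.lapMatrix ℝ u u * G.lapMatrix ℝ u u = (G.degree u : ℝ) ^ 2 := by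
    rw [lap_apply]; simp [G.irrefl]; ring
  have h2 : ∀ k ∈ Finset.univ.erase u,
      G.lapMatrix ℝ k u * G.lapMatrix ℝ k u = (if G.Adj k u then (1:ℝ) else 0) := by
    intro k hk
    have hku : k ≠ u := (Finset.mem_erase.mp hk).1
    rw [lap_apply, if_neg hku]
    split_ifs <;> ring
  rw [h1, Finset.sum_congr rfl h2, Finset.sum_erase _ (by simp [G.irrefl]), deg_sum]

lemma col_mul_sum (htf : G.CliqueFree 3) (u v : Fin n) (huv : G.Adj u v) :
    ∑ k, G.lapMatrix ℝ k u * G.lapMatrix ℝ k v = -(G.degree u : ℝ) - G.degree v := by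
  have hne : u ≠ v := huv.ne
  rw [← Finset.add_sum_erase _ _ (Finset.mem_univ u)]
  have hv : v ∈ Finset.univ.erase u := Finset.mem_erase.mpr ⟨hne.symm, Finset.mem_univ v⟩
  rw [← Finset.add_sum_erase _ _ hv]
  have h1 : G.lapMatrix ℝ u u * G.lapMatrix ℝ u v = -(G.degree u : ℝ) := by
    rw [lap_apply, lap_apply]; simp [G.irrefl, hne, huv]
  have h2 : G.lapMatrix ℝ v u * G.lapMatrix ℝ v v = -(G.degree v : ℝ) := by
    rw [lap_apply, lap_apply]; simp [G.irrefl, hne.symm, huv.symm]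
  have h3 : ∑ k ∈ (Finset.univ.erase u).erase v, G.lapMatrix ℝ k u * G.lapMatrix ℝ k v = 0 := by
    apply Finset.sum_eq_zero
    intro k hk
    have hkv : k ≠ v := (Finset.mem_erase.mp hk).1
    have hku : k ≠ u := (Finset.mem_erase.mp (Finset.mem_erase.mp hk).2).1
    rw [lap_apply, lap_apply, if_neg hku, if_neg hkv]
    by_cases hadj : G.Adj k u
    · by_cases hadj2 : G.Adj k v
      · exact absurd (SimpleGraph.is3Clique_triple_iff.mpr ⟨hadj, hadj2, huv⟩) (htf {k, u, v})
      · simp [hadj2]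
    · simp [hadj]
  rw [h1, h2, h3]
  ring

lemma pick_sum (f : Fin n → ℝ) (x : Fin n) :
    ∑ k, f k * (if k = x then (1:ℝ) else 0) = f x := by
  simp [mul_ite]

end Aux



open Matrix in
/-- For any edge `uv` of a triangle-free simple graph `G` with `n` vertices
and `m ≥ 1` edges, `‖LI(G)‖_{F_2} ≥ √(Υ + 2√Ψ)`, where
`Υ = (d_u - 2m/n)² + (d_v - 2m/n)² + d_u + d_v` and
`Ψ = ((d_u - 2m/n)² + d_u)((d_v - 2m/n)² + d_v) - (d_u + d_v - 4m/n)²`. -/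
theorem stmt_8 {n : ℕ} (G : SimpleGraph (Fin n)) (htf : G.CliqueFree 3)
    (hm : 1 ≤ numEdges G) (u v : Fin n) (huv : G.Adj u v) :
    Real.sqrt (((((G.degree u : ℝ) - 2 * (numEdges G : ℝ) / n) ^ 2 +
          ((G.degree v : ℝ) - 2 * (numEdges G : ℝ) / n) ^ 2 +
          (G.degree u : ℝ) + (G.degree v : ℝ))) +
        2 * Real.sqrt (((((G.degree u : ℝ) - 2 * (numEdges G : ℝ) / n) ^ 2 + (G.degree u : ℝ)) *
            (((G.degree v : ℝ) - 2 * (numEdges G : ℝ) / n) ^ 2 + (G.degree v : ℝ))) -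
          ((G.degree u : ℝ) + (G.degree v : ℝ) - 4 * (numEdges G : ℝ) / n) ^ 2)) ≤
      kyFanLI G 2 := by
  have hne : u ≠ v := huv.ne
  have hn : 2 ≤ n := by
    have h1 := u.isLt; have h2 := v.isLt
    have h3 : (u : ℕ) ≠ (v : ℕ) := fun h => hne (Fin.ext h)
    omega
  set t : ℝ := 2 * (numEdges G : ℝ) / n with ht
  set C11 : ℝ := ((G.degree u : ℝ) - t) ^ 2 + (G.degree u : ℝ) with hC11
  set C22 : ℝ := ((G.degree v : ℝ) - t) ^ 2 + (G.degree v : ℝ) with hC22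
  set C12 : ℝ := -((G.degree u : ℝ) + (G.degree v : ℝ) - 2 * t) with hC12
  set D : ℝ := Real.sqrt ((C11 - C22) ^ 2 + 4 * C12 ^ 2) with hD
  have hDnn : 0 ≤ D := Real.sqrt_nonneg _
  have hD2 : D ^ 2 = (C11 - C22) ^ 2 + 4 * C12 ^ 2 := Real.sq_sqrt (by positivity)
  -- orthonormality of rows of the eigenbasis
  have horto : ∀ x y : Fin n, ∑ i, (hLH G).eigenvectorBasis i x * (hLH G).eigenvectorBasis i y
      = ∑ k, (if k = x then (1:ℝ) else 0) * (if k = y then (1:ℝ) else 0) := by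
    intro x y
    rw [← parseval G (fun k => if k = x then (1:ℝ) else 0) (fun k => if k = y then (1:ℝ) else 0)]
    exact Finset.sum_congr rfl fun i _ => by rw [pick_sum, pick_sum]
  have ha : ∑ i, (hLH G).eigenvectorBasis i u * (hLH G).eigenvectorBasis i u = 1 := by
    rw [horto u u]; simp
  have hb : ∑ i, (hLH G).eigenvectorBasis i v * (hLH G).eigenvectorBasis i v = 1 := by
    rw [horto v v]; simp
  have hab : ∑ i, (hLH G).eigenvectorBasis i u * (hLH G).eigenvectorBasis i v = 0 := by
    rw [horto u v]
    rw [pick_sum (fun k => if k = u then (1:ℝ) else 0) v]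
    simp [hne.symm]
  -- Laplacian entries
  have hLuu : G.lapMatrix ℝ u u = (G.degree u : ℝ) := by
    rw [lap_apply]; simp [G.irrefl]
  have hLvv : G.lapMatrix ℝ v v = (G.degree v : ℝ) := by
    rw [lap_apply]; simp [G.irrefl]
  have hLuv : G.lapMatrix ℝ u v = -1 := by
    rw [lap_apply, if_neg hne, if_pos huv]; norm_num
  have hLvu : G.lapMatrix ℝ v u = -1 := by
    rw [lap_apply, if_neg hne.symm, if_pos huv.symm]; norm_num
  -- the quadratic-form identity
  have hR : ∀ c d : ℝ, ∑ i, ((hLH G).eigenvalues i - t) ^ 2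
      * (c * (hLH G).eigenvectorBasis i u + d * (hLH G).eigenvectorBasis i v) ^ 2
      = c ^ 2 * C11 + 2 * c * d * C12 + d ^ 2 * C22 := by
    intro c d
    set x : Fin n → ℝ := fun k =>
      c * (if k = u then (1:ℝ) else 0) + d * (if k = v then (1:ℝ) else 0) with hx
    set y : Fin n → ℝ := fun k => (G.lapMatrix ℝ *ᵥ x) k - t * x k with hy
    have hxs : ∀ i, ∑ k, (hLH G).eigenvectorBasis i k * x k
        = c * (hLH G).eigenvectorBasis i u + d * (hLH G).eigenvectorBasis i v := by
      intro i
      rw [Finset.sum_congr rfl fun k _ => (by simp only [hx]; ring :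
          (hLH G).eigenvectorBasis i k * x k
          = c * ((hLH G).eigenvectorBasis i k * (if k = u then (1:ℝ) else 0))
            + d * ((hLH G).eigenvectorBasis i k * (if k = v then (1:ℝ) else 0))),
        Finset.sum_add_distrib, ← Finset.mul_sum, ← Finset.mul_sum, pick_sum, pick_sum]
    have hys : ∀ i, ∑ k, (hLH G).eigenvectorBasis i k * y k
        = ((hLH G).eigenvalues i - t)
          * (c * (hLH G).eigenvectorBasis i u + d * (hLH G).eigenvectorBasis i v) := by
      intro i
      have h1 : ∑ k, (hLH G).eigenvectorBasis i k * y k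
          = ∑ k, (hLH G).eigenvectorBasis i k * (G.lapMatrix ℝ *ᵥ x) k
            - t * ∑ k, (hLH G).eigenvectorBasis i k * x k := by
        rw [Finset.mul_sum, ← Finset.sum_sub_distrib]
        exact Finset.sum_congr rfl fun k _ => by simp only [hy]; ring
      rw [h1, eig_eq G x i, hxs i]
      ring
    have hmv : ∀ k, (G.lapMatrix ℝ *ᵥ x) k
        = c * G.lapMatrix ℝ k u + d * G.lapMatrix ℝ k v := by
      intro k
      show (∑ j, G.lapMatrix ℝ k j * x j) = _
      rw [Finset.sum_congr rfl fun j _ => (by simp only [hx]; ring :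
          G.lapMatrix ℝ k j * x j
          = c * (G.lapMatrix ℝ k j * (if j = u then (1:ℝ) else 0))
            + d * (G.lapMatrix ℝ k j * (if j = v then (1:ℝ) else 0))),
        Finset.sum_add_distrib, ← Finset.mul_sum, ← Finset.mul_sum, pick_sum, pick_sum]
    have hyy : ∑ k, y k * y k = c ^ 2 * C11 + 2 * c * d * C12 + d ^ 2 * C22 := by
      have hptw : ∀ k, y k * y k
          = c ^ 2 * (G.lapMatrix ℝ k u * G.lapMatrix ℝ k u)
            + 2 * c * d * (G.lapMatrix ℝ k u * G.lapMatrix ℝ k v)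
            + d ^ 2 * (G.lapMatrix ℝ k v * G.lapMatrix ℝ k v)
            - 2 * t * c ^ 2 * (G.lapMatrix ℝ k u * (if k = u then (1:ℝ) else 0))
            - 2 * t * c * d * (G.lapMatrix ℝ k u * (if k = v then (1:ℝ) else 0))
            - 2 * t * c * d * (G.lapMatrix ℝ k v * (if k = u then (1:ℝ) else 0))
            - 2 * t * d ^ 2 * (G.lapMatrix ℝ k v * (if k = v then (1:ℝ) else 0))
            + t ^ 2 * c ^ 2 * ((if k = u then (1:ℝ) else 0) * (if k = u then (1:ℝ) else 0))
            + 2 * t ^ 2 * c * d * ((if k = u then (1:ℝ) else 0) * (if k = v then (1:ℝ) else 0))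
            + t ^ 2 * d ^ 2 * ((if k = v then (1:ℝ) else 0) * (if k = v then (1:ℝ) else 0)) := by
        intro k
        simp only [hy]
        rw [hmv k]
        simp only [hx]
        ring
      rw [Finset.sum_congr rfl fun k _ => hptw k]
      simp only [Finset.sum_add_distrib, Finset.sum_sub_distrib, ← Finset.mul_sum]
      rw [col_sq_sum G u, col_sq_sum G v, col_mul_sum G htf u v huv,
        pick_sum (fun k => G.lapMatrix ℝ k u) u, pick_sum (fun k => G.lapMatrix ℝ k u) v,
        pick_sum (fun k => G.lapMatrix ℝ k v) u, pick_sum (fun k => G.lapMatrix ℝ k v) v,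
        pick_sum (fun k => if k = u then (1:ℝ) else 0) u,
        pick_sum (fun k => if k = u then (1:ℝ) else 0) v,
        pick_sum (fun k => if k = v then (1:ℝ) else 0) v,
        hLuu, hLvv, hLuv, hLvu]
      simp only [if_pos rfl, if_neg hne.symm, if_true]
      norm_num
      rw [hC11, hC22, hC12]
      ring
    calc ∑ i, ((hLH G).eigenvalues i - t) ^ 2
        * (c * (hLH G).eigenvectorBasis i u + d * (hLH G).eigenvectorBasis i v) ^ 2
        = ∑ i, (∑ k, (hLH G).eigenvectorBasis i k * y k)
            * (∑ k, (hLH G).eigenvectorBasis i k * y k) := by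
          refine Finset.sum_congr rfl fun i _ => ?_
          rw [hys i]; ring
      _ = ∑ k, y k * y k := parseval G y y
      _ = c ^ 2 * C11 + 2 * c * d * C12 + d ^ 2 * C22 := hyy
  
  obtain ⟨i, j, hij, hqi, hqj⟩ := core_aux hn (fun i => ((hLH G).eigenvalues i - t) ^ 2)
    (fun i => (hLH G).eigenvectorBasis i u) (fun i => (hLH G).eigenvectorBasis i v)
    (fun i => sq_nonneg _) ha hb hab C11 C22 C12 D hDnn hD2 hR
  set σp : Equiv.Perm (Fin n) :=
    (Fin.revPerm.trans (Tuple.sort (hLH G).eigenvalues)) with hσp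
  have hlap : ∀ k, lapEig G k = (hLH G).eigenvalues (σp k) := fun k => rfl
  set g : Fin n → ℝ := fun k => |lapEig G k - t| with hg
  have hky : kyFanLI G 2 = sortDesc g ⟨0, by omega⟩ + sortDesc g ⟨1, by omega⟩ := by
    have hfil : (Finset.univ.filter (fun i : Fin n => (i : ℕ) < 2))
        = {(⟨0, by omega⟩ : Fin n), ⟨1, by omega⟩} := by
      ext k
      simp [Fin.ext_iff]
      omega
    show ∑ i ∈ Finset.univ.filter (fun i : Fin n => (i : ℕ) < 2), LIsv G i = _
    rw [hfil, Finset.sum_insert (by simp [Fin.ext_iff]), Finset.sum_singleton]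
    rfl
  have hgi : g (σp.symm i) = |(hLH G).eigenvalues i - t| := by
    simp only [hg]
    rw [hlap, Equiv.apply_symm_apply]
  have hgj : g (σp.symm j) = |(hLH G).eigenvalues j - t| := by
    simp only [hg]
    rw [hlap, Equiv.apply_symm_apply]
  have hijp : σp.symm i ≠ σp.symm j := fun h => hij (by simpa using congrArg σp h)
  have htop := top_two hn g (σp.symm i) (σp.symm j) hijp
  have h1 : Real.sqrt ((C11 + C22 + D) / 2) ≤ g (σp.symm i) := by
    rw [hgi, ← Real.sqrt_sq_eq_abs]
    exact Real.sqrt_le_sqrt hqi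
  have h2 : Real.sqrt ((C11 + C22 - D) / 2) ≤ g (σp.symm j) := by
    rw [hgj, ← Real.sqrt_sq_eq_abs]
    exact Real.sqrt_le_sqrt hqj
  have hkyge : Real.sqrt ((C11 + C22 + D) / 2) + Real.sqrt ((C11 + C22 - D) / 2)
      ≤ kyFanLI G 2 := by
    rw [hky]; exact le_trans (add_le_add h1 h2) htop
  clear_value t C11 C22 C12 D σp g
  clear hR horto ha hb hab hLuu hLvv hLuv hLvu hlap hky htop h1 h2 hgi hgj hqi hqj hijp hij hσp hg g σp i j
  have hge2 : C22 - C11 ≤ D := by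
    nlinarith [sq_nonneg (D - (C22 - C11)), sq_nonneg (D + (C22 - C11)), sq_nonneg C12]
  have hC11nn : (0:ℝ) ≤ C11 := by rw [hC11]; positivity
  have hC22nn : (0:ℝ) ≤ C22 := by rw [hC22]; positivity
  have hαnn : 0 ≤ (C11 + C22 + D) / 2 := by linarith
  have hprod : (C11 + C22 + D) / 2 * ((C11 + C22 - D) / 2) = C11 * C22 - C12 ^ 2 := by
    linear_combination (-1/4) * hD2
  have hXeq : C11 * C22 - ((G.degree u : ℝ) + (G.degree v : ℝ) - 4 * (numEdges G : ℝ) / n) ^ 2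
      = (C11 + C22 + D) / 2 * ((C11 + C22 - D) / 2) := by
    rw [hprod, hC12, ht]; ring
  have hUeq : ((G.degree u : ℝ) - t) ^ 2 + ((G.degree v : ℝ) - t) ^ 2
      + (G.degree u : ℝ) + (G.degree v : ℝ)
      = (C11 + C22 + D) / 2 + (C11 + C22 - D) / 2 := by
    rw [hC11, hC22]; ring
  rw [hXeq, hUeq]
  rcases le_or_gt 0 ((C11 + C22 - D) / 2) with hβ0 | hβ0
  · rw [Real.sqrt_mul hαnn,
      show (C11 + C22 + D) / 2 + (C11 + C22 - D) / 2
          + 2 * (Real.sqrt ((C11 + C22 + D) / 2) * Real.sqrt ((C11 + C22 - D) / 2))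
        = (Real.sqrt ((C11 + C22 + D) / 2) + Real.sqrt ((C11 + C22 - D) / 2)) ^ 2 by
          rw [add_sq, Real.sq_sqrt hαnn, Real.sq_sqrt hβ0]; ring,
      Real.sqrt_sq (by positivity)]
    exact hkyge
  · rw [Real.sqrt_eq_zero_of_nonpos (mul_nonpos_of_nonneg_of_nonpos hαnn hβ0.le)]
    calc Real.sqrt ((C11 + C22 + D) / 2 + (C11 + C22 - D) / 2 + 2 * 0)
        ≤ Real.sqrt ((C11 + C22 + D) / 2) := Real.sqrt_le_sqrt (by linarith)
      _ ≤ Real.sqrt ((C11 + C22 + D) / 2) + Real.sqrt ((C11 + C22 - D) / 2) :=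
          le_add_of_nonneg_right (Real.sqrt_nonneg _)
      _ ≤ kyFanLI G 2 := hkyge
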